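/- (First Cousin Principle) Let φ be an alternating p-form of comass one on a finite-dimensional real inner product space V, and let ξ = (e₁,…,e_p) ∈ G(φ) be a φ-plane. Then for every index k ∈ {1,…,p} and every vector b ∈ V orthogonal to span{e₁,…,e_p}, one has φ(e₁,…,e_{k−1}, b, e_{k+1},…,e_p) = 0. (Lemma 2.4) -/

import Mathlib

open scoped RealInnerProductSpace

noncomputable section

variable {V : Type*} [NormedAddCommGroup V] [InnerProductSpace ℝ V] [FiniteDimensional ℝ V]

/-- Lemma 2.4 (The First Cousin Principle): if `φ` is an alternating `p`-form of comass one
and `ξ = (e₁,…,e_p)` is a `φ`-plane, then `φ` vanishes on every first cousin of `ξ`, i.e.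
`φ(e₁,…,e_{k−1}, b, e_{k+1},…,e_p) = 0` for every index `k` and every vector `b`
orthogonal to `span{e₁,…,e_p}`. -/
theorem firstCousinPrinciple {p : ℕ} (hp : 1 ≤ p)
    (φ : V [⋀^Fin p]→ₗ[ℝ] ℝ)
    (hcomass : ∀ e : Fin p → V, Orthonormal ℝ e → φ e ≤ 1)
    (e : Fin p → V) (he : Orthonormal ℝ e) (heφ : φ e = 1)
    (k : Fin p) (b : V) (hb : b ∈ (Submodule.span ℝ (Set.range e))ᗮ) :
    φ (Function.update e k b) = 0 := by
  have hbe : ∀ i, ⟪e i, b⟫ = 0 := fun i =>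
    hb (e i) (Submodule.subset_span (Set.mem_range_self i))
  rcases eq_or_ne b 0 with rfl | hb0
  · simp
  set u : V := ‖b‖⁻¹ • b with hu
  have hnb : ‖b‖ ≠ 0 := norm_ne_zero_iff.mpr hb0
  have hue : ∀ i, ⟪e i, u⟫ = 0 := by
    intro i; simp [hu, real_inner_smul_right, hbe i]
  have hueS : ∀ i, ⟪u, e i⟫ = 0 := fun i => by
    rw [real_inner_comm]; exact hue i
  have huu : ⟪u, u⟫ = 1 := by
    have h1 : ‖u‖ = 1 := norm_smul_inv_norm hb0
    rw [real_inner_self_eq_norm_sq, h1]; norm_num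
  have hee : ∀ i j, ⟪e i, e j⟫ = if i = j then 1 else 0 := orthonormal_iff_ite.mp he
  suffices hc : φ (Function.update e k u) = 0 by
    have hbu : b = ‖b‖ • u := by rw [hu, smul_smul, mul_inv_cancel₀ hnb, one_smul]
    rw [hbu, φ.map_update_smul, hc, smul_zero]
  set c : ℝ := φ (Function.update e k u) with hcdef
  set r : ℝ := Real.sqrt (1 + c ^ 2) with hr
  have hr2 : r ^ 2 = 1 + c ^ 2 := Real.sq_sqrt (by positivity)
  have hrpos : 0 < r := Real.sqrt_pos.mpr (by positivity)
  set v : V := (1 / r) • e k + (c / r) • u with hv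
  have hvv : ⟪v, v⟫ = 1 := by
    simp only [hv, inner_add_left, inner_add_right, real_inner_smul_left,
      real_inner_smul_right, hue k, hueS k, huu, hee k k, if_pos rfl]
    field_simp
    rw [if_pos trivial]
    linarith [hr2]
  have hve : ∀ i, i ≠ k → ⟪v, e i⟫ = 0 := by
    intro i hik
    rw [hv, inner_add_left, real_inner_smul_left, real_inner_smul_left, hueS i,
      hee k i, if_neg (fun h => hik h.symm)]
    ring
  have hev : ∀ i, i ≠ k → ⟪e i, v⟫ = 0 := fun i hik => by
    rw [real_inner_comm]; exact hve i hik
  set f : Fin p → V := Function.update e k v with hf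
  have hon : Orthonormal ℝ f := by
    rw [orthonormal_iff_ite]
    intro i j
    by_cases hik : i = k <;> by_cases hjk : j = k
    · rw [hik, hjk]
      simpa [hf] using hvv
    · have hij : i ≠ j := by rw [hik]; exact fun h => hjk h.symm
      simp [hf, hik, Function.update_of_ne hjk, hve j hjk, hij]
      exact (fun h : k = j => hjk h.symm)
    · have hij : i ≠ j := by rw [hjk]; exact hik
      simp [hf, hjk, Function.update_of_ne hik, hev i hik, hij]
      exact hik
    · simp [hf, Function.update_of_ne hik, Function.update_of_ne hjk, hee i j]
  have key : φ f = r := by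
    have hfe : f = Function.update e k ((1 / r) • e k + (c / r) • u) := rfl
    rw [hfe, φ.map_update_add, φ.map_update_smul, φ.map_update_smul,
      Function.update_eq_self, heφ, ← hcdef]
    simp only [smul_eq_mul]
    field_simp
    linarith [hr2]
  have hle : r ≤ 1 := key ▸ hcomass f hon
  nlinarith [hr2, hrpos]
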